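/- Let ⟨G,m⟩ be a d-periodic orbit graph with |E| = d|V| - d, and suppose that for some configuration p the framework (⟨G,m⟩, p) is infinitesimally rigid on the fixed torus. Then every subgraph G' ⊆ G with nonempty edge set E' and vertex set V' (the vertices incident to E') satisfying |E'| = d|V'| - d has gain space of rank at least d - 1: the ℤ-submodule of ℤ^d generated by the net gains of the closed walks of G' has rank ≥ d - 1. -/

import Mathlib

open Matrix

/-- The row vector `z L ∈ ℝ^d` obtained from an integer vector `z ∈ ℤ^d` and the
lattice matrix `L`. -/
noncomputable def gainVec {d : ℕ} (L : Matrix (Fin d) (Fin d) ℝ) (z : Fin d → ℤ) :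
    Fin d → ℝ :=
  Matrix.vecMul (fun k => (z k : ℝ)) L

/-- An infinitesimal motion of the periodic orbit framework `(⟨G,m⟩,p)` on the fixed
torus with lattice matrix `L`:
`(u_{i(e)} - u_{j(e)}) · (p_{i(e)} - p_{j(e)} - m_e L) = 0` for every edge `e`. -/
def IsMotion (d : ℕ) {V E : Type*} (ie je : E → V) (m : E → Fin d → ℤ)
    (p : V → Fin d → ℝ) (L : Matrix (Fin d) (Fin d) ℝ) (u : V → Fin d → ℝ) : Prop :=
  ∀ e : E, (fun k => u (ie e) k - u (je e) k) ⬝ᵥ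
      (fun k => p (ie e) k - p (je e) k - gainVec L (m e) k) = 0

/-- `IsWalk ie je a w b` : the list `w` of edges, each traversed forwards (`true`) or
backwards (`false`), forms a walk in the multigraph from vertex `a` to vertex `b`. -/
def IsWalk {V E : Type*} (ie je : E → V) : V → List (E × Bool) → V → Prop
  | a, [], b => a = b
  | a, ed :: rest, b =>
      a = (if ed.2 then ie ed.1 else je ed.1) ∧
        IsWalk ie je (if ed.2 then je ed.1 else ie ed.1) rest b

/-- The net gain of a walk: `+m_e` for forwards-traversed edges and `-m_e` for
backwards-traversed edges. -/
def netGain {d : ℕ} {E : Type*} (m : E → Fin d → ℤ) (w : List (E × Bool)) : Fin d → ℤ :=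
  (w.map fun ed => if ed.2 then m ed.1 else -m ed.1).sum

/-- The gain space of the subgraph spanned by a set `Y` of edges: the `ℤ`-submodule of
`ℤ^d` generated by the net gains of the closed walks using only edges of `Y`. -/
def gainSpaceOf (d : ℕ) {V E : Type*} (ie je : E → V) (m : E → Fin d → ℤ)
    (Y : Set E) : Submodule ℤ (Fin d → ℤ) :=
  Submodule.span ℤ
    {g | ∃ (v : V) (w : List (E × Bool)),
      IsWalk ie je v w v ∧ (∀ ed ∈ w, ed.1 ∈ Y) ∧ netGain m w = g}


open Module

namespace Walks
variable {V E : Type*} (ie je : E → V)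

lemma isWalk_append {a b c : V} {w1 w2 : List (E × Bool)}
    (h1 : IsWalk ie je a w1 b) (h2 : IsWalk ie je b w2 c) :
    IsWalk ie je a (w1 ++ w2) c := by
  induction w1 generalizing a with
  | nil => cases h1; simpa using h2
  | cons ed rest ih =>
      obtain ⟨h1a, h1b⟩ := h1
      exact ⟨h1a, ih h1b⟩

def flipWalk (w : List (E × Bool)) : List (E × Bool) :=
  w.reverse.map fun ed => (ed.1, !ed.2)

lemma isWalk_flip {a b : V} {w : List (E × Bool)} (h : IsWalk ie je a w b) :
    IsWalk ie je b (flipWalk w) a := by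
  induction w generalizing a with
  | nil => cases h; exact rfl
  | cons ed rest ih =>
      obtain ⟨h1, h2⟩ := h
      have : flipWalk (ed :: rest) = flipWalk rest ++ [(ed.1, !ed.2)] := by
        simp [flipWalk]
      rw [this]
      refine isWalk_append ie je (ih h2) ?_
      cases hb : ed.2 <;> simp_all [IsWalk]

lemma netGain_append {d : ℕ} (m : E → Fin d → ℤ) (w1 w2 : List (E × Bool)) :
    netGain m (w1 ++ w2) = netGain m w1 + netGain m w2 := by
  simp [netGain]

lemma netGain_flip {d : ℕ} (m : E → Fin d → ℤ) (w : List (E × Bool)) :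
    netGain m (flipWalk w) = -netGain m w := by
  induction w with
  | nil => simp [netGain, flipWalk]
  | cons ed rest ih =>
      have : flipWalk (ed :: rest) = flipWalk rest ++ [(ed.1, !ed.2)] := by
        simp [flipWalk]
      rw [this, netGain_append, ih]
      have : netGain m [(ed.1, !ed.2)] = -netGain m [ed] := by
        cases hb : ed.2 <;> simp [netGain, hb]
      rw [this]
      have : netGain m (ed :: rest) = netGain m [ed] + netGain m rest := by
        simp [netGain]
      rw [this]; abel

lemma mem_flipWalk {w : List (E × Bool)} {ed : E × Bool} (h : ed ∈ flipWalk w) :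
    ∃ ed' ∈ w, ed.1 = ed'.1 := by
  simp only [flipWalk, List.mem_map, List.mem_reverse] at h
  obtain ⟨ed', h1, h2⟩ := h
  exact ⟨ed', h1, by rw [← h2]⟩

/-- Reachability setoid via walks with edges in `Y`. -/
def reachSetoid (Y : Set E) : Setoid V where
  r v w := ∃ l, IsWalk ie je v l w ∧ ∀ ed ∈ l, ed.1 ∈ Y
  iseqv := by
    refine ⟨fun v => ⟨[], rfl, by simp⟩, ?_, ?_⟩
    · rintro v w ⟨l, hl, hm⟩
      refine ⟨flipWalk l, isWalk_flip ie je hl, ?_⟩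
      intro ed hed
      obtain ⟨ed', h1, h2⟩ := mem_flipWalk hed
      rw [h2]; exact hm ed' h1
    · rintro u v w ⟨l1, hl1, hm1⟩ ⟨l2, hl2, hm2⟩
      exact ⟨l1 ++ l2, isWalk_append ie je hl1 hl2, by
        intro ed hed; rcases List.mem_append.mp hed with h | h
        exacts [hm1 ed h, hm2 ed h]⟩

variable (Y : Set E)

noncomputable def rep (v : V) : V := (Quotient.mk (reachSetoid ie je Y) v).out

lemma rep_reach (v : V) :
    ∃ l, IsWalk ie je (rep ie je Y v) l v ∧ ∀ ed ∈ l, ed.1 ∈ Y :=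
  Quotient.exact (Quotient.out_eq (Quotient.mk (reachSetoid ie je Y) v))

lemma rep_edge {e : E} (he : e ∈ Y) : rep ie je Y (ie e) = rep ie je Y (je e) := by
  have : Quotient.mk (reachSetoid ie je Y) (ie e) = Quotient.mk (reachSetoid ie je Y) (je e) := by
    apply Quotient.sound
    exact ⟨[(e, true)], ⟨by simp, by simp [IsWalk]⟩, by simpa using he⟩
  simp [rep, this]

noncomputable def gamma {d : ℕ} (m : E → Fin d → ℤ) (v : V) : Fin d → ℤ :=
  netGain m (Classical.choose (rep_reach ie je Y v))

/-- The per-edge effective gain is the net gain of a closed walk in `Y`. -/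
lemma gamma_edge {d : ℕ} (m : E → Fin d → ℤ) {e : E} (he : e ∈ Y) :
    ∃ (v : V) (w : List (E × Bool)),
      IsWalk ie je v w v ∧ (∀ ed ∈ w, ed.1 ∈ Y) ∧
      netGain m w = gamma ie je Y m (ie e) + m e - gamma ie je Y m (je e) := by
  obtain ⟨hwi, hmi⟩ := Classical.choose_spec (rep_reach ie je Y (ie e))
  obtain ⟨hwj, hmj⟩ := Classical.choose_spec (rep_reach ie je Y (je e))
  set li := Classical.choose (rep_reach ie je Y (ie e))
  set lj := Classical.choose (rep_reach ie je Y (je e))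
  refine ⟨rep ie je Y (ie e), li ++ ([(e, true)] ++ flipWalk lj), ?_, ?_, ?_⟩
  · refine isWalk_append ie je hwi ?_
    refine isWalk_append ie je (⟨by simp, by simp [IsWalk]⟩ :
      IsWalk ie je (ie e) [(e, true)] (je e)) ?_
    rw [rep_edge ie je Y he]
    exact isWalk_flip ie je hwj
  · intro ed hed
    rcases List.mem_append.mp hed with h | h
    · exact hmi ed h
    rcases List.mem_append.mp h with h | h
    · simp at h; rw [h]; exact he
    · obtain ⟨ed', h1, h2⟩ := mem_flipWalk h
      rw [h2]; exact hmj ed' h1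
  · rw [netGain_append, netGain_append, netGain_flip]
    have h1 : netGain m [(e, true)] = m e := by simp [netGain]
    rw [h1]
    have hgi : gamma ie je Y m (ie e) = netGain m li := rfl
    have hgj : gamma ie je Y m (je e) = netGain m lj := rfl
    rw [hgi, hgj]
    abel

end Walks

section LinAlg

variable {d : ℕ} {V E : Type*} [Fintype V] [Fintype E] [DecidableEq V] [DecidableEq E]

/-- `gainVec L` as a `ℤ`-linear map. -/
noncomputable def gainVecL (d : ℕ) (L : Matrix (Fin d) (Fin d) ℝ) :
    (Fin d → ℤ) →ₗ[ℤ] (Fin d → ℝ) where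
  toFun z := gainVec L z
  map_add' x y := by
    funext k
    simp [gainVec, Matrix.vecMul, dotProduct, add_mul, Finset.sum_add_distrib]
  map_smul' n x := by
    funext k
    simp [gainVec, Matrix.vecMul, dotProduct, Finset.mul_sum]
    ring_nf

/-- The rigidity map: rows of the rigidity matrix. -/
noncomputable def rigidityMap (d : ℕ) (ie je : E → V) (m : E → Fin d → ℤ)
    (p : V → Fin d → ℝ) (L : Matrix (Fin d) (Fin d) ℝ) :
    (V → Fin d → ℝ) →ₗ[ℝ] (E → ℝ) where
  toFun u := fun e => (fun k => u (ie e) k - u (je e) k) ⬝ᵥ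
      (fun k => p (ie e) k - p (je e) k - gainVec L (m e) k)
  map_add' u v := by
    funext e
    have h : (fun k => (u + v) (ie e) k - (u + v) (je e) k)
        = (fun k => u (ie e) k - u (je e) k) + fun k => v (ie e) k - v (je e) k := by
      funext k; show _ - _ = _; simp [Pi.add_apply]; ring
    show (fun k => (u + v) (ie e) k - (u + v) (je e) k) ⬝ᵥ _ = _
    rw [h, add_dotProduct]; rfl
  map_smul' c u := by
    funext e
    have h : (fun k => (c • u) (ie e) k - (c • u) (je e) k)
        = c • fun k => u (ie e) k - u (je e) k := by
      funext k; show _ - _ = _; simp [Pi.smul_apply]; ring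
    show (fun k => (c • u) (ie e) k - (c • u) (je e) k) ⬝ᵥ _ = _
    rw [h, smul_dotProduct]; rfl

/-- The constant-configuration map. -/
noncomputable def constMap (d : ℕ) (V : Type*) : (Fin d → ℝ) →ₗ[ℝ] (V → Fin d → ℝ) :=
  LinearMap.pi fun _ => LinearMap.id

/-- The test-motion map used for the dimension count. -/
noncomputable def phiMap (d : ℕ) (V' : Finset V) (u₀ : V → Fin d → ℝ) :
    (({v : V // v ∉ V'} → (Fin d → ℝ)) × ((Fin d → ℝ) × ℝ)) →ₗ[ℝ] (V → Fin d → ℝ) where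
  toFun x := fun v => x.2.1 + x.2.2 • u₀ v + (if h : v ∈ V' then 0 else x.1 ⟨v, h⟩)
  map_add' x y := by
    funext v
    by_cases h : v ∈ V' <;> funext k <;>
      simp [h, Prod.fst_add, Prod.snd_add, Pi.add_apply] <;> ring
  map_smul' c x := by
    funext v
    by_cases h : v ∈ V' <;> funext k <;>
      simp [h, Prod.smul_fst, Prod.smul_snd, Pi.smul_apply, smul_eq_mul] <;> ring

end LinAlg

set_option maxHeartbeats 1000000 in
/-- If `⟨G,m⟩` has `|E| = d|V| - d` and `(⟨G,m⟩,p)` is infinitesimally rigid on the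
fixed torus for some configuration `p`, then every nonempty subgraph `E'` with vertex
set `V(E')` (the vertices incident to `E'`) satisfying `|E'| = d|V(E')| - d` has gain
space of rank at least `d - 1`. -/
theorem rigid_implies_subgraph_gainSpace_rank (d : ℕ) (hd : 1 ≤ d)
    (V E : Type*) [Fintype V] [Fintype E] [DecidableEq V] [DecidableEq E]
    (ie je : E → V) (m : E → Fin d → ℤ)
    (L : Matrix (Fin d) (Fin d) ℝ) (hL : IsUnit L)
    (hcount : Fintype.card E = d * Fintype.card V - d)
    (p : V → Fin d → ℝ)
    (hrigid : ∀ u : V → Fin d → ℝ, IsMotion d ie je m p L u → ∀ v w : V, u v = u w) :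
    ∀ E' : Finset E, E'.Nonempty →
      E'.card = d * (E'.image ie ∪ E'.image je).card - d →
      d - 1 ≤ Module.finrank ℤ (gainSpaceOf d ie je m (↑E' : Set E)) := by
  classical
  intro E' hne hcard
  by_contra hcon
  push_neg at hcon
  -- basic notation
  set V' : Finset V := E'.image ie ∪ E'.image je with hV'def
  obtain ⟨e1, he1⟩ := hne
  have hieV' : ∀ e ∈ E', ie e ∈ V' := fun e he =>
    Finset.mem_union_left _ (Finset.mem_image_of_mem _ he)
  have hjeV' : ∀ e ∈ E', je e ∈ V' := fun e he =>
    Finset.mem_union_right _ (Finset.mem_image_of_mem _ he)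
  have hV'ne : 1 ≤ V'.card := Finset.card_pos.mpr ⟨ie e1, hieV' e1 he1⟩
  have hVpos : 1 ≤ Fintype.card V := Fintype.card_pos_iff.mpr ⟨ie e1⟩
  set q : E → Fin d → ℝ :=
    fun e => fun k => p (ie e) k - p (je e) k - gainVec L (m e) k with hqdef
  set R := rigidityMap d ie je m p L with hRdef
  -- the kernel of R is the set of constants
  have hRapp : ∀ u e, R u e = (fun k => u (ie e) k - u (je e) k) ⬝ᵥ q e := fun u e => rfl
  have hker : LinearMap.ker R = LinearMap.range (constMap d V) := by
    apply le_antisymm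
    · intro u hu
      have hm : IsMotion d ie je m p L u := fun e => congrFun (LinearMap.mem_ker.mp hu) e
      exact ⟨u (ie e1), funext fun v => (hrigid u hm v (ie e1)).symm⟩
    · rintro _ ⟨c, rfl⟩
      rw [LinearMap.mem_ker]
      funext e
      rw [hRapp]
      have h0 : (fun k => constMap d V c (ie e) k - constMap d V c (je e) k)
          = (0 : Fin d → ℝ) := by
        funext k; show c k - c k = 0; ring
      rw [h0]
      exact zero_dotProduct _
  have hkerrank : finrank ℝ (LinearMap.ker R) = d := by
    rw [hker]
    have hinj : Function.Injective (constMap d V) := fun c c' h => congrFun h (ie e1)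
    rw [LinearMap.finrank_range_of_inj hinj, Module.finrank_pi]
    simp
  -- dimension bookkeeping for R, surjectivity
  have hdomV : finrank ℝ (V → Fin d → ℝ) = Fintype.card V * d := by
    rw [Module.finrank_pi_fintype]
    simp [Module.finrank_pi, Finset.sum_const, Finset.card_univ, Nat.mul_comm]
  have hRsurj : Function.Surjective R := by
    rw [← LinearMap.range_eq_top]
    apply Submodule.eq_top_of_finrank_eq
    have h1 := LinearMap.finrank_range_add_finrank_ker R
    rw [hkerrank, hdomV] at h1
    rw [Module.finrank_pi]
    have h2 : d * Fintype.card V = Fintype.card V * d := Nat.mul_comm _ _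
    have h3 : d ≤ d * Fintype.card V := Nat.le_mul_of_pos_right d hVpos
    omega
  -- restricted map T
  set T : (V → Fin d → ℝ) →ₗ[ℝ] ((↥E' : Type _) → ℝ) :=
    (LinearMap.funLeft ℝ ℝ (Subtype.val : ↥E' → E)) ∘ₗ R with hTdef
  have hTapp : ∀ u (x : ↥E'), T u x = (fun k => u (ie x.1) k - u (je x.1) k) ⬝ᵥ q x.1 :=
    fun u x => rfl
  have hTsurj : Function.Surjective T := by
    intro y
    obtain ⟨u, hu⟩ := hRsurj (fun e => if h : e ∈ E' then y ⟨e, h⟩ else 0)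
    refine ⟨u, funext fun x => ?_⟩
    have h1 : T u x = R u x.1 := rfl
    rw [h1, hu]
    simp [x.2]
  -- loop case
  by_cases hloop : ∃ e ∈ E', ie e = je e
  · obtain ⟨e0, he0, hl⟩ := hloop
    obtain ⟨u, hu⟩ := hTsurj 1
    have h0 := congrFun hu ⟨e0, he0⟩
    rw [hTapp] at h0
    rw [hl] at h0
    simp [dotProduct] at h0
  push_neg at hloop
  have hd2 : 2 ≤ d := by omega
  -- gain space basis
  set GS := gainSpaceOf d ie je m (↑E' : Set E) with hGSdef
  obtain ⟨n, Bz⟩ := Submodule.basisOfPid (Pi.basisFun ℤ (Fin d)) GS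
  have hn : n ≤ d - 2 := by
    have := Module.finrank_eq_card_basis Bz
    simp only [Fintype.card_fin] at this
    omega
  -- the span of the real gain vectors
  set K : Submodule ℝ (EuclideanSpace ℝ (Fin d)) :=
    Submodule.span ℝ ((fun z => WithLp.toLp 2 (gainVec L z)) '' (GS : Set (Fin d → ℤ))) with hKdef
  have hKrank : finrank ℝ K ≤ n := by
    have hsub : K ≤ Submodule.span ℝ
        (Set.range fun i : Fin n => (WithLp.toLp 2 (gainVec L ((Bz i : Fin d → ℤ))) : EuclideanSpace ℝ (Fin d))) := by
      rw [hKdef, Submodule.span_le]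
      rintro x ⟨g, hg, rfl⟩
      have hrep : g = ∑ i, Bz.repr ⟨g, hg⟩ i • ((Bz i : Fin d → ℤ)) := by
        have h := congrArg Subtype.val (Bz.sum_repr ⟨g, hg⟩)
        rw [Submodule.coe_sum] at h
        simp only [Submodule.coe_smul] at h
        exact h.symm
      have hsum : gainVec L g
          = ∑ i, (Bz.repr ⟨g, hg⟩ i : ℝ) • gainVec L ((Bz i : Fin d → ℤ)) := by
        calc gainVec L g = gainVecL d L g := rfl
          _ = gainVecL d L (∑ i, Bz.repr ⟨g, hg⟩ i • ((Bz i : Fin d → ℤ))) := by rw [← hrep]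
          _ = ∑ i, Bz.repr ⟨g, hg⟩ i • gainVecL d L ((Bz i : Fin d → ℤ)) := by
              rw [map_sum]
              exact Finset.sum_congr rfl fun i _ => LinearMap.map_smul _ _ _
          _ = ∑ i, (Bz.repr ⟨g, hg⟩ i : ℝ) • gainVec L ((Bz i : Fin d → ℤ)) :=
              Finset.sum_congr rfl fun i _ => (Int.cast_smul_eq_zsmul ℝ _ _).symm
      show (WithLp.toLp 2 (gainVec L g) : EuclideanSpace ℝ (Fin d)) ∈ _
      rw [hsum, WithLp.toLp_sum]
      simp only [WithLp.toLp_smul]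
      exact Submodule.sum_mem _ fun i _ =>
        Submodule.smul_mem _ _ (Submodule.subset_span ⟨i, rfl⟩)
    refine le_trans (Submodule.finrank_mono hsub) ?_
    refine le_trans (finrank_span_le_card _) ?_
    rw [Set.toFinset_range]
    exact le_trans (Finset.card_image_le) (by simp)
  have hKorth : 2 ≤ finrank ℝ (Kᗮ : Submodule ℝ (EuclideanSpace ℝ (Fin d))) := by
    have h := Submodule.finrank_add_finrank_orthogonal K
    rw [finrank_euclideanSpace_fin] at h
    omega
  -- two orthogonal directions
  obtain ⟨a, b, hpair, hortha, horthb⟩ :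
      ∃ a b : Fin d → ℝ,
        (∀ s t : ℝ, s • a + t • b = 0 → s = 0 ∧ t = 0) ∧
        (∀ g ∈ GS, gainVec L g ⬝ᵥ a = 0) ∧
        (∀ g ∈ GS, gainVec L g ⬝ᵥ b = 0) := by
    set BO := Module.finBasis ℝ (↥(Kᗮ : Submodule ℝ (EuclideanSpace ℝ (Fin d)))) with hBO
    set i0 : Fin (finrank ℝ ↥Kᗮ) := ⟨0, by omega⟩ with hi0
    set i1 : Fin (finrank ℝ ↥Kᗮ) := ⟨1, by omega⟩ with hi1
    have hii : i0 ≠ i1 := by simp [hi0, hi1, Fin.ext_iff]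
    have horth : ∀ (i : Fin (finrank ℝ ↥Kᗮ)) (g : Fin d → ℤ), g ∈ GS →
        gainVec L g ⬝ᵥ ((BO i : ↥Kᗮ) : EuclideanSpace ℝ (Fin d)) = 0 := by
      intro i g hg
      have hmem : (WithLp.toLp 2 (gainVec L g) : EuclideanSpace ℝ (Fin d)) ∈ K :=
        Submodule.subset_span ⟨g, hg, rfl⟩
      have h := (Submodule.mem_orthogonal K _).mp (BO i).2 _ hmem
      rw [PiLp.inner_apply] at h
      simpa [dotProduct, RCLike.inner_apply, mul_comm] using h
    refine ⟨((BO i0 : ↥Kᗮ) : EuclideanSpace ℝ (Fin d)),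
      ((BO i1 : ↥Kᗮ) : EuclideanSpace ℝ (Fin d)), ?_, fun g hg => horth i0 g hg,
      fun g hg => horth i1 g hg⟩
    intro s t hst
    have hco : s • (BO i0) + t • (BO i1) = (0 : ↥Kᗮ) := by
      apply Subtype.ext
      apply WithLp.ofLp_injective 2
      simpa using hst
    have h0 := congrArg (fun z => BO.repr z i0) hco
    have h1 := congrArg (fun z => BO.repr z i1) hco
    simp [Basis.repr_self, Finsupp.single_apply, hii, hii.symm] at h0 h1
    exact ⟨h0, h1⟩
  have hane : a ≠ 0 := by
    intro h
    have := (hpair 1 0 (by rw [h]; simp)).1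
    exact one_ne_zero this
  -- shifted configuration
  set γ : V → Fin d → ℤ := Walks.gamma ie je (↑E' : Set E) m with hγdef
  set p' : V → Fin d → ℝ := fun v => fun k => p v k + gainVec L (γ v) k with hp'def
  have hq : ∀ e ∈ E', ∃ g ∈ GS, q e = (fun k => p' (ie e) k - p' (je e) k) - gainVec L g := by
    intro e he
    refine ⟨γ (ie e) + m e - γ (je e), ?_, ?_⟩
    · obtain ⟨v, w, hw, hmem, hng⟩ :=
        Walks.gamma_edge ie je (↑E' : Set E) m (show e ∈ (↑E' : Set E) from he)
      exact Submodule.subset_span ⟨v, w, hw, hmem, hng⟩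
    · funext k
      have hG : gainVec L (γ (ie e) + m e - γ (je e))
          = gainVec L (γ (ie e)) + gainVec L (m e) - gainVec L (γ (je e)) := by
        show gainVecL d L _ = _
        rw [map_sub, map_add]; rfl
      show p (ie e) k - p (je e) k - gainVec L (m e) k = _
      rw [Pi.sub_apply, hG]
      simp [hp'def]
      ring
  -- dot products against differences of p'
  have hdiffdot : ∀ (e : E) (y : Fin d → ℝ),
      (fun k => p' (ie e) k - p' (je e) k) ⬝ᵥ y = p' (ie e) ⬝ᵥ y - p' (je e) ⬝ᵥ y := by
    intro e y
    simp [dotProduct, sub_mul, Finset.sum_sub_distrib]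
  -- the rotation motion
  set urot : V → Fin d → ℝ :=
    fun v => if v ∈ V' then (p' v ⬝ᵥ a) • b - (p' v ⬝ᵥ b) • a else 0 with hurotdef
  -- produce a nonconstant sub-motion
  obtain ⟨u₀, hSP, v1, hv1, v2, hv2, hne12⟩ :
      ∃ u₀ : V → Fin d → ℝ,
        (∀ e ∈ E', (fun k => u₀ (ie e) k - u₀ (je e) k) ⬝ᵥ q e = 0) ∧
        ∃ v1 ∈ V', ∃ v2 ∈ V', u₀ v1 ≠ u₀ v2 := by
    by_cases hconst : ∀ v ∈ V', ∀ w ∈ V', urot v = urot w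
    · -- rotation is constant: all edge vectors are orthogonal to a
      have hxa : ∀ e ∈ E', (fun k => p' (ie e) k - p' (je e) k) ⬝ᵥ a = 0 := by
        intro e he
        have h := hconst (ie e) (hieV' e he) (je e) (hjeV' e he)
        rw [hurotdef] at h
        simp only [if_pos (hieV' e he), if_pos (hjeV' e he)] at h
        have hsum : (-(( fun k => p' (ie e) k - p' (je e) k) ⬝ᵥ b)) • a
            + ((fun k => p' (ie e) k - p' (je e) k) ⬝ᵥ a) • b = 0 := by
          rw [hdiffdot e a, hdiffdot e b]
          funext k
          have hk := congrFun h k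
          simp only [Pi.sub_apply, Pi.smul_apply, smul_eq_mul] at hk
          simp only [Pi.add_apply, Pi.smul_apply, Pi.zero_apply, smul_eq_mul]
          ring_nf
          ring_nf at hk
          linarith
        exact (hpair _ _ hsum).2
      refine ⟨fun v => if v = ie e1 then a else 0, ?_, ie e1, hieV' e1 he1,
        je e1, hjeV' e1 he1, ?_⟩
      · intro e he
        obtain ⟨g, hg, hqe⟩ := hq e he
        have hvec : (fun k => (if ie e = ie e1 then a else 0) k - (if je e = ie e1 then a else 0) k)
            = (((if ie e = ie e1 then (1:ℝ) else 0) - (if je e = ie e1 then (1:ℝ) else 0))) • a := by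
          funext k
          by_cases h1 : ie e = ie e1 <;> by_cases h2 : je e = ie e1 <;> simp [h1, h2]
        show (fun k => (if ie e = ie e1 then a else 0) k - (if je e = ie e1 then a else 0) k) ⬝ᵥ q e = 0
        rw [hvec, smul_dotProduct, hqe, dotProduct_sub,
          dotProduct_comm a ((fun k => p' (ie e) k - p' (je e) k)),
          dotProduct_comm a (gainVec L g), hxa e he, hortha g hg]
        simp
      · intro h
        have h' : (if ie e1 = ie e1 then a else 0) = (if je e1 = ie e1 then a else 0) := h
        rw [if_pos rfl, if_neg (fun hh => hloop e1 he1 hh.symm)] at h'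
        exact hane h'
    · push_neg at hconst
      obtain ⟨w1, hw1, w2, hw2, hnec⟩ := hconst
      refine ⟨urot, ?_, w1, hw1, w2, hw2, hnec⟩
      intro e he
      obtain ⟨g, hg, hqe⟩ := hq e he
      have hvec : (fun k => urot (ie e) k - urot (je e) k)
          = ((fun k => p' (ie e) k - p' (je e) k) ⬝ᵥ a) • b
            - ((fun k => p' (ie e) k - p' (je e) k) ⬝ᵥ b) • a := by
        funext k
        rw [hurotdef]
        simp only [if_pos (hieV' e he), if_pos (hjeV' e he)]
        rw [hdiffdot e a, hdiffdot e b]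
        simp only [Pi.sub_apply, Pi.smul_apply, smul_eq_mul]
        ring
      obtain ⟨x, hx⟩ : ∃ x : Fin d → ℝ, (fun k => p' (ie e) k - p' (je e) k) = x := ⟨_, rfl⟩
      rw [hx] at hvec hqe
      rw [hvec, hqe]
      rw [sub_dotProduct, smul_dotProduct, smul_dotProduct, dotProduct_sub, dotProduct_sub]
      rw [dotProduct_comm b x, dotProduct_comm a x,
        dotProduct_comm b (gainVec L g), dotProduct_comm a (gainVec L g),
        hortha g hg, horthb g hg]
      rw [smul_eq_mul, smul_eq_mul]; ring
  -- the dimension count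
  set Φ := phiMap d V' u₀ with hΦdef
  have hΦapp : ∀ (x : ({v : V // v ∉ V'} → (Fin d → ℝ)) × ((Fin d → ℝ) × ℝ)) (v : V),
      Φ x v = x.2.1 + x.2.2 • u₀ v + (if h : v ∈ V' then 0 else x.1 ⟨v, h⟩) := fun x v => rfl
  have hΦinj : Function.Injective Φ := by
    rw [← LinearMap.ker_eq_bot]
    rw [Submodule.eq_bot_iff]
    rintro ⟨f, c, t⟩ hx
    rw [LinearMap.mem_ker] at hx
    have happ : ∀ v : V, c + t • u₀ v + (if h : v ∈ V' then 0 else f ⟨v, h⟩) = 0 :=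
      fun v => congrFun hx v
    have h1 := happ v1
    have h2 := happ v2
    rw [dif_pos hv1] at h1
    rw [dif_pos hv2] at h2
    have ht : t = 0 := by
      by_contra ht
      apply hne12
      have heq : t • u₀ v1 = t • u₀ v2 := by
        have h3 := h1.trans h2.symm
        have h4 := add_right_cancel h3
        exact add_left_cancel h4
      exact smul_right_injective _ ht heq
    have hc : c = 0 := by
      rw [ht, zero_smul, add_zero, add_zero] at h1
      exact h1
    have hf : f = 0 := by
      funext vv
      have h5 := happ vv.1
      rw [dif_neg vv.2, ht, hc] at h5
      simpa using h5
    rw [hf, hc, ht]; rfl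
  have hΦker : LinearMap.range Φ ≤ LinearMap.ker T := by
    rintro _ ⟨⟨f, c, t⟩, rfl⟩
    rw [LinearMap.mem_ker]
    funext x
    obtain ⟨e, he⟩ := x
    rw [hTapp]
    have hvec : (fun k => Φ (f, c, t) (ie e) k - Φ (f, c, t) (je e) k)
        = t • fun k => u₀ (ie e) k - u₀ (je e) k := by
      funext k
      rw [hΦapp, hΦapp, dif_pos (hieV' e he), dif_pos (hjeV' e he)]
      simp only [Pi.add_apply, Pi.smul_apply, smul_eq_mul, Pi.zero_apply]
      ring
    show (fun k => Φ (f, c, t) (ie e) k - Φ (f, c, t) (je e) k) ⬝ᵥ q e = 0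
    rw [hvec, smul_dotProduct, hSP e he, smul_zero]
  -- numerics
  have hdim1 : finrank ℝ (({v : V // v ∉ V'} → (Fin d → ℝ)) × ((Fin d → ℝ) × ℝ))
      = (Fintype.card V - V'.card) * d + (d + 1) := by
    have h1 : finrank ℝ ({v : V // v ∉ V'} → (Fin d → ℝ))
        = Fintype.card {v : V // v ∉ V'} * d := by
      rw [Module.finrank_pi_fintype]
      simp [Module.finrank_pi, Finset.sum_const, Finset.card_univ, Nat.mul_comm]
    have h2 : Fintype.card {v : V // v ∉ V'} = Fintype.card V - V'.card := by
      rw [Fintype.card_subtype_compl]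
      simp [Fintype.card_coe]
    rw [Module.finrank_prod, Module.finrank_prod, h1, h2, Module.finrank_pi,
      Module.finrank_self]
    simp
  have hdim2 : (Fintype.card V - V'.card) * d + (d + 1) ≤ finrank ℝ (LinearMap.ker T) := by
    rw [← hdim1, ← LinearMap.finrank_range_of_inj hΦinj]
    exact Submodule.finrank_mono hΦker
  have hdim3 : finrank ℝ (LinearMap.range T) + finrank ℝ (LinearMap.ker T)
      = Fintype.card V * d := by
    rw [← hdomV]; exact LinearMap.finrank_range_add_finrank_ker T
  have hdim4 : finrank ℝ (LinearMap.range T) = E'.card := by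
    rw [LinearMap.range_eq_top.mpr hTsurj]
    rw [finrank_top, Module.finrank_pi, Fintype.card_coe]
  -- final contradiction
  have hsplit : (Fintype.card V - V'.card) * d + V'.card * d = Fintype.card V * d := by
    rw [← Nat.add_mul, Nat.sub_add_cancel (Finset.card_le_univ V' |>.trans_eq (by simp))]
  have hdd : d ≤ d * V'.card := Nat.le_mul_of_pos_right d hV'ne
  have hcomm : d * V'.card = V'.card * d := Nat.mul_comm _ _
  omega
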